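/- Let {ρᵢ} be a sequence of nonincreasing nonnegative functions on [A,B] with ∫_A^B ρᵢ^{3/2} < M for all i. Then some subsequence converges in L¹([A,B]) to a function ρ with ∫_A^B ρ^{3/2} ≤ liminf ∫_A^B ρᵢ^{3/2}. -/

import Mathlib

open MeasureTheory intervalIntegral Set Filter
open scoped Topology

/-- pointwise bound for antitone functions with bounded energy -/
lemma helper_pt_bound {A B : ℝ} {M : ℝ} (hM : 0 < M) {f : ℝ → ℝ}
    (hanti : AntitoneOn f (Set.Icc A B)) (hnn : ∀ t ∈ Set.Icc A B, 0 ≤ f t)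
    (hint : IntegrableOn (fun τ => f τ ^ (3/2:ℝ)) (Set.Icc A B))
    (hb : (∫ τ in Set.Icc A B, f τ ^ (3/2:ℝ)) < M) {t : ℝ} (ht : t ∈ Set.Ioc A B) :
    f t ≤ M ^ (2/3:ℝ) * (t - A) ^ (-(2/3):ℝ) := by
  have htA : 0 < t - A := sub_pos.2 ht.1
  have htIcc : t ∈ Set.Icc A B := ⟨ht.1.le, ht.2⟩
  have hsub : Set.Icc A t ⊆ Set.Icc A B := Set.Icc_subset_Icc_right ht.2
  have hnnt : 0 ≤ f t := hnn t htIcc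
  have h1 : f t ^ (3/2:ℝ) * (t - A) ≤ ∫ τ in Set.Icc A t, f τ ^ (3/2:ℝ) := by
    have hconst : (∫ _ in Set.Icc A t, f t ^ (3/2:ℝ)) = f t ^ (3/2:ℝ) * (t - A) := by
      rw [setIntegral_const, Real.volume_real_Icc_of_le ht.1.le, smul_eq_mul,
        mul_comm]
    rw [← hconst]
    refine setIntegral_mono_on (integrableOn_const ?_)
      (hint.mono_set hsub) measurableSet_Icc (fun τ hτ => ?_)
    · rw [Real.volume_Icc]; exact ENNReal.ofReal_ne_top
    · exact Real.rpow_le_rpow hnnt (hanti (hsub hτ) htIcc hτ.2) (by norm_num)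
  have h2 : (∫ τ in Set.Icc A t, f τ ^ (3/2:ℝ)) ≤ ∫ τ in Set.Icc A B, f τ ^ (3/2:ℝ) := by
    refine setIntegral_mono_set hint ?_ (HasSubset.Subset.eventuallyLE hsub)
    exact (ae_restrict_iff' measurableSet_Icc).2 (Filter.Eventually.of_forall
      (fun τ hτ => Real.rpow_nonneg (hnn τ hτ) _))
  have h3 : f t ^ (3/2:ℝ) ≤ M * (t - A)⁻¹ := by
    have hlt : f t ^ (3/2:ℝ) * (t - A) < M := lt_of_le_of_lt (h1.trans h2) hb
    rw [← div_eq_mul_inv]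
    exact (le_div_iff₀ htA).2 hlt.le
  calc f t = (f t ^ (3/2:ℝ)) ^ (2/3:ℝ) := by
        rw [← Real.rpow_mul hnnt]
        norm_num
    _ ≤ (M * (t - A)⁻¹) ^ (2/3:ℝ) := by
        exact Real.rpow_le_rpow (Real.rpow_nonneg hnnt _) h3 (by norm_num)
    _ = M ^ (2/3:ℝ) * (t - A) ^ (-(2/3):ℝ) := by
        rw [Real.mul_rpow hM.le (inv_nonneg.2 htA.le), ← Real.rpow_neg_one (t - A),
          ← Real.rpow_mul htA.le]
        norm_num

lemma helper_g_integrable {A B : ℝ} (hAB : A ≤ B) (c : ℝ) :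
    IntegrableOn (fun t => c * (t - A) ^ (-(2/3):ℝ)) (Set.Icc A B) := by
  have h1 : IntervalIntegrable (fun x : ℝ => x ^ (-(2/3):ℝ)) volume 0 (B - A) :=
    intervalIntegral.intervalIntegrable_rpow' (by norm_num)
  have h2 : IntervalIntegrable (fun x : ℝ => (x - A) ^ (-(2/3):ℝ)) volume A B := by
    simpa using h1.comp_sub_right A
  rw [intervalIntegrable_iff_integrableOn_Icc_of_le hAB] at h2
  exact h2.const_mul c

lemma helper_subseq_liminf {a : ℕ → ℝ} {M : ℝ} (hb : ∀ i, a i ≤ M) (h0 : ∀ i, 0 ≤ a i) :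
    ∃ ψ : ℕ → ℕ, StrictMono ψ ∧
      Tendsto (fun n => a (ψ n)) atTop (𝓝 (Filter.liminf a atTop)) := by
  set L := Filter.liminf a atTop with hLdef
  have hbdd : IsBoundedUnder (· ≤ ·) atTop a := isBoundedUnder_of ⟨M, fun i => hb i⟩
  have hbdd' : IsBoundedUnder (· ≥ ·) atTop a := isBoundedUnder_of ⟨0, fun i => h0 i⟩
  have hfreq : ∀ n : ℕ, ∃ᶠ k in atTop, a k < L + 1/(n+1) := by
    intro n
    refine frequently_lt_of_liminf_lt hbdd.isCoboundedUnder_ge ?_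
    have : (0:ℝ) < 1/(n+1) := by positivity
    linarith
  obtain ⟨ψ, hψ, hψP⟩ := Filter.extraction_forall_of_frequently hfreq
  refine ⟨ψ, hψ, ?_⟩
  rw [tendsto_order]
  constructor
  · intro b hbL
    exact (hψ.tendsto_atTop.eventually (eventually_lt_of_lt_liminf hbL hbdd'))
  · intro b hLb
    obtain ⟨n0, hn0⟩ := exists_nat_one_div_lt (show (0:ℝ) < b - L by linarith)
    filter_upwards [Filter.eventually_ge_atTop n0] with n hn
    have h1 : (1:ℝ)/(n+1) ≤ 1/(n0+1) := by
      apply one_div_le_one_div_of_le (by positivity)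
      exact_mod_cast Nat.succ_le_succ hn
    have := hψP n
    linarith

lemma helper_helly {b : ℚ → ℝ} {u : ℕ → ℚ → ℝ} (hmem : ∀ i q, u i q ∈ Set.Icc 0 (b q)) :
    ∃ h : ℚ → ℝ, ∃ φ : ℕ → ℕ, StrictMono φ ∧
      ∀ q, Tendsto (fun i => u (φ i) q) atTop (𝓝 (h q)) := by
  letI : MetricSpace (ℚ → ℝ) := PiCountable.metricSpace
  have hK : IsCompact {f : ℚ → ℝ | ∀ q, f q ∈ Set.Icc 0 (b q)} := by
    have := isCompact_univ_pi (fun q : ℚ => isCompact_Icc (a := (0:ℝ)) (b := b q))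
    simpa [Set.pi] using this
  obtain ⟨h, _, φ, hφ, hconv⟩ := hK.tendsto_subseq (x := u) (fun i q => hmem i q)
  refine ⟨h, φ, hφ, fun q => ?_⟩
  exact tendsto_pi_nhds.1 hconv q

theorem stmt7 (A B : ℝ) (hAB : A < B) (M : ℝ) (hM : 0 < M)
    (ρs : ℕ → ℝ → ℝ)
    (hanti : ∀ i, AntitoneOn (ρs i) (Set.Icc A B))
    (hnonneg : ∀ i, ∀ t ∈ Set.Icc A B, 0 ≤ ρs i t)
    (hint : ∀ i, IntegrableOn (fun τ => ρs i τ ^ (3 / 2 : ℝ)) (Set.Icc A B))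
    (hbound : ∀ i, (∫ τ in Set.Icc A B, ρs i τ ^ (3 / 2 : ℝ)) < M) :
    ∃ (φ : ℕ → ℕ) (ρ : ℝ → ℝ), StrictMono φ ∧
      Tendsto (fun i => ∫ τ in Set.Icc A B, |ρs (φ i) τ - ρ τ|) atTop (nhds 0) ∧
      (∫ τ in Set.Icc A B, ρ τ ^ (3 / 2 : ℝ)) ≤
        Filter.liminf (fun i => ∫ τ in Set.Icc A B, ρs i τ ^ (3 / 2 : ℝ)) atTop := by
  classical
  set μ := volume.restrict (Set.Icc A B) with hμdef
  set a : ℕ → ℝ := fun i => ∫ τ in Set.Icc A B, ρs i τ ^ (3/2:ℝ) with hadef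
  have ha0 : ∀ i, 0 ≤ a i := fun i =>
    setIntegral_nonneg measurableSet_Icc (fun τ hτ => Real.rpow_nonneg (hnonneg i τ hτ) _)
  set L := Filter.liminf a atTop with hLdef
  have hL0 : 0 ≤ L :=
    le_liminf_of_le (isBoundedUnder_of ⟨M, fun i => (hbound i).le⟩).isCoboundedUnder_ge
      (Filter.Eventually.of_forall ha0)
  obtain ⟨ψ, hψ, hψtend⟩ := helper_subseq_liminf (fun i => (hbound i).le) ha0
  -- clamping to [A, B]
  set c : ℝ → ℝ := fun t => max A (min t B) with hcdef
  have hcmem : ∀ t, c t ∈ Set.Icc A B :=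
    fun t => ⟨le_max_left _ _, max_le hAB.le (min_le_right t B)⟩
  have hcid : ∀ t ∈ Set.Icc A B, c t = t := fun t ht => by
    simp [hcdef, min_eq_left ht.2, max_eq_right ht.1]
  have hcmono : Monotone c := fun s t hst => max_le_max le_rfl (min_le_min hst le_rfl)
  set σ : ℕ → ℝ → ℝ := fun i t => ρs (ψ i) (c t) with hσdef
  have hσanti : ∀ i, Antitone (σ i) :=
    fun i s t hst => hanti (ψ i) (hcmem s) (hcmem t) (hcmono hst)
  have hσnn : ∀ i t, 0 ≤ σ i t := fun i t => hnonneg (ψ i) _ (hcmem t)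
  have hσmeas : ∀ i, Measurable (σ i) := fun i => (hσanti i).measurable
  set g : ℝ → ℝ := fun t => M ^ (2/3:ℝ) * (t - A) ^ (-(2/3):ℝ) with hgdef
  have hσbd : ∀ i, ∀ t ∈ Set.Ioc A B, σ i t ≤ g t := by
    intro i t ht
    have heq : σ i t = ρs (ψ i) t := by
      simp only [hσdef]; rw [hcid t ⟨ht.1.le, ht.2⟩]
    rw [heq]
    exact helper_pt_bound hM (hanti _) (hnonneg _) (hint _) (hbound _) ht
  -- Helly selection on the rationals
  set u : ℕ → ℚ → ℝ := fun i q => if (q:ℝ) ∈ Set.Ioo A B then σ i q else 0 with hudef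
  set bq : ℚ → ℝ := fun q => if (q:ℝ) ∈ Set.Ioo A B then g q else 0 with hbqdef
  have humem : ∀ i q, u i q ∈ Set.Icc 0 (bq q) := by
    intro i q
    by_cases hq : (q:ℝ) ∈ Set.Ioo A B
    · simp only [hudef, hbqdef, if_pos hq]
      exact ⟨hσnn i q, hσbd i q ⟨hq.1, hq.2.le⟩⟩
    · simp only [hudef, hbqdef, if_neg hq]
      exact ⟨le_rfl, le_rfl⟩
  obtain ⟨h, φ', hφ', hconvq⟩ := helper_helly humem
  set F : ℕ → ℝ → ℝ := fun i => σ (φ' i) with hFdef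
  have hFmeas : ∀ i, Measurable (F i) := fun i => hσmeas (φ' i)
  have hFnn : ∀ i t, 0 ≤ F i t := fun i t => hσnn (φ' i) t
  have hFconv : ∀ q : ℚ, (q:ℝ) ∈ Set.Ioo A B →
      Tendsto (fun i => F i (q:ℝ)) atTop (𝓝 (h q)) := by
    intro q hq
    have h1 := hconvq q
    simp only [hudef, if_pos hq] at h1
    exact h1
  -- limit function
  set ρ : ℝ → ℝ := fun t => Filter.limsup (fun i => F i t) atTop with hρdef
  have hFbd : ∀ i, ∀ t, A < t → F i t ≤ g (min t B) := by
    intro i t ht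
    have hmem : min t B ∈ Set.Ioc A B := ⟨lt_min ht hAB, min_le_right _ _⟩
    have heq : F i t = F i (min t B) := by
      simp only [hFdef, hσdef, hcdef]
      congr 2
      rw [min_assoc, min_self]
    rw [heq]
    exact hσbd (φ' i) _ hmem
  have hFbdd : ∀ t, A < t → IsBoundedUnder (· ≤ ·) atTop (fun i => F i t) :=
    fun t ht => isBoundedUnder_of ⟨g (min t B), fun i => hFbd i t ht⟩
  have hFbdd' : ∀ t, IsBoundedUnder (· ≥ ·) atTop (fun i => F i t) :=
    fun t => isBoundedUnder_of ⟨0, fun i => hFnn i t⟩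
  have hρ_nn : ∀ t, A < t → 0 ≤ ρ t := fun t ht =>
    le_limsup_of_frequently_le (Filter.Frequently.of_forall (fun i => hFnn i t)) (hFbdd t ht)
  have hρ_le : ∀ t, t ∈ Set.Ioc A B → ρ t ≤ g t := fun t ht =>
    limsup_le_of_le (hFbdd' t).isCoboundedUnder_le
      (Filter.Eventually.of_forall (fun i => by
        simpa [min_eq_left ht.2] using hFbd i t ht.1))
  have hρ_anti : ∀ s t : ℝ, A < s → s ≤ t → ρ t ≤ ρ s := by
    intro s t hs hst
    exact limsup_le_limsup (Filter.Eventually.of_forall (fun i => hσanti (φ' i) hst))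
      (hFbdd' t).isCoboundedUnder_le (hFbdd s hs)
  have hρq : ∀ q : ℚ, (q:ℝ) ∈ Set.Ioo A B → ρ q = h q := fun q hq => (hFconv q hq).limsup_eq
  have hρq' : ∀ q : ℚ, (q:ℝ) ∈ Set.Ioo A B →
      Filter.liminf (fun i => F i (q:ℝ)) atTop = ρ q := by
    intro q hq
    rw [hρq q hq]
    exact (hFconv q hq).liminf_eq
  -- countable discontinuity set
  have hBA : (0:ℝ) < B - A := by linarith
  have hcn : ∀ n : ℕ, A < A + (B - A)/(n+1) := by
    intro n
    have : (0:ℝ) < (B - A)/(n+1) := by positivity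
    linarith
  set ρn : ℕ → ℝ → ℝ := fun n t => ρ (max t (A + (B - A)/(n+1))) with hρndef
  have hρn_anti : ∀ n, Antitone (ρn n) := by
    intro n s t hst
    exact hρ_anti _ _ (lt_of_lt_of_le (hcn n) (le_max_right _ _))
      (max_le_max hst le_rfl)
  set Ebad : Set ℝ := (⋃ n, {t | ¬ContinuousAt (ρn n) t}) ∪ {A, B} with hEdef
  have hEbadc : Ebad.Countable :=
    (Set.countable_iUnion (fun n => (hρn_anti n).countable_not_continuousAt)).union
      ((Set.countable_singleton B).insert A)
  have hrle : ∀ s : Set ℝ, μ s ≤ volume s := fun s =>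
    Measure.le_iff'.1 Measure.restrict_le_self s
  have hEnull : μ Ebad = 0 :=
    le_antisymm ((hrle Ebad).trans_eq (hEbadc.measure_zero _)) zero_le
  -- a.e. pointwise convergence
  have hae : ∀ᵐ t ∂μ, Tendsto (fun i => F i t) atTop (𝓝 (ρ t)) := by
    have h2 : ∀ᵐ t ∂μ, t ∉ Ebad := by
      rw [ae_iff]
      refine measure_mono_null (fun t ht => ?_) hEnull
      simpa using ht
    filter_upwards [ae_restrict_mem measurableSet_Icc, h2] with t htI htE
    simp only [hEdef, Set.mem_union, Set.mem_iUnion, Set.mem_setOf_eq, Set.mem_insert_iff,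
      Set.mem_singleton_iff, not_or, not_exists, not_not] at htE
    obtain ⟨hcont, htA, htB⟩ := htE
    have htO : t ∈ Set.Ioo A B :=
      ⟨lt_of_le_of_ne htI.1 (Ne.symm htA), lt_of_le_of_ne htI.2 htB⟩
    obtain ⟨n, hn⟩ : ∃ n : ℕ, A + (B - A)/(n+1) < t := by
      obtain ⟨n, hn⟩ := exists_nat_one_div_lt
        (show 0 < (t - A)/(B - A) from div_pos (by linarith [htO.1]) hBA)
      refine ⟨n, ?_⟩
      have h1 : (1:ℝ) * (B - A) < (t - A) * (n+1) :=
        (div_lt_div_iff₀ (by positivity) hBA).1 hn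
      have h2 : (B - A)/(n+1) < t - A := (div_lt_iff₀ (by positivity)).2 (by nlinarith)
      linarith
    have hcongr : ∀ s, A + (B - A)/(n+1) < s → ρn n s = ρ s := by
      intro s hs
      simp only [hρndef]
      rw [max_eq_left hs.le]
    have key : ∀ ε : ℝ, 0 < ε →
        Filter.limsup (fun i => F i t) atTop ≤ ρ t + ε ∧
        ρ t - ε ≤ Filter.liminf (fun i => F i t) atTop := by
      intro ε hε
      obtain ⟨δ, hδ, hδc⟩ := Metric.continuousAt_iff.1 (hcont n) ε hε
      obtain ⟨q, hq1, hq2⟩ := exists_rat_btwn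
        (show max (A + (B - A)/(n+1)) (t - δ) < t from max_lt hn (by linarith))
      obtain ⟨r, hr1, hr2⟩ := exists_rat_btwn (show t < min B (t + δ) from
        lt_min htO.2 (by linarith))
      have hqcn : A + (B - A)/(n+1) < q := lt_of_le_of_lt (le_max_left _ _) hq1
      have hqO : (q:ℝ) ∈ Set.Ioo A B := ⟨lt_trans (hcn n) hqcn, lt_trans hq2 htO.2⟩
      have hrO : (r:ℝ) ∈ Set.Ioo A B :=
        ⟨lt_trans htO.1 hr1, lt_of_lt_of_le hr2 (min_le_left _ _)⟩
      have hρnt : ρn n t = ρ t := hcongr t hn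
      have hq5 : ρ (q:ℝ) ≤ ρ t + ε := by
        have hd : dist (q:ℝ) t < δ := by
          rw [Real.dist_eq, abs_sub_lt_iff]
          constructor
          · linarith
          · have := le_max_right (A + (B - A)/(n+1)) (t - δ)
            linarith
        have hd2 := hδc hd
        rw [Real.dist_eq, abs_sub_lt_iff] at hd2
        have hq4 : ρn n (q:ℝ) = ρ (q:ℝ) := hcongr _ hqcn
        rw [hq4, hρnt] at hd2
        linarith [hd2.1]
      have hr5 : ρ t - ε ≤ ρ (r:ℝ) := by
        have hd : dist (r:ℝ) t < δ := by
          rw [Real.dist_eq, abs_sub_lt_iff]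
          constructor
          · have := min_le_right B (t + δ)
            linarith
          · linarith
        have hd2 := hδc hd
        rw [Real.dist_eq, abs_sub_lt_iff] at hd2
        have hr4 : ρn n (r:ℝ) = ρ (r:ℝ) := hcongr _ (lt_trans hn hr1)
        rw [hr4, hρnt] at hd2
        linarith [hd2.2]
      constructor
      · calc Filter.limsup (fun i => F i t) atTop
            ≤ Filter.limsup (fun i => F i (q:ℝ)) atTop :=
              limsup_le_limsup (Filter.Eventually.of_forall
                (fun i => hσanti (φ' i) hq2.le))
                (hFbdd' t).isCoboundedUnder_le (hFbdd _ hqO.1)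
          _ = ρ (q:ℝ) := rfl
          _ ≤ ρ t + ε := hq5
      · calc ρ t - ε ≤ ρ (r:ℝ) := hr5
          _ = Filter.liminf (fun i => F i (r:ℝ)) atTop := (hρq' r hrO).symm
          _ ≤ Filter.liminf (fun i => F i t) atTop :=
              liminf_le_liminf (Filter.Eventually.of_forall
                (fun i => hσanti (φ' i) hr1.le))
                (hFbdd' _) ((hFbdd t htO.1).isCoboundedUnder_ge)
    have hsup : Filter.limsup (fun i => F i t) atTop ≤ ρ t :=
      le_of_forall_sub_le (fun ε hε => by linarith [(key ε hε).1])
    have hinf : ρ t ≤ Filter.liminf (fun i => F i t) atTop :=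
      le_of_forall_sub_le (fun ε hε => (key ε hε).2)
    have hls : Filter.liminf (fun i => F i t) atTop = ρ t :=
      le_antisymm ((liminf_le_limsup (hFbdd t htO.1) (hFbdd' t)).trans hsup) hinf
    have hls2 : Filter.limsup (fun i => F i t) atTop = ρ t :=
      le_antisymm hsup (hinf.trans (liminf_le_limsup (hFbdd t htO.1) (hFbdd' t)))
    exact tendsto_of_liminf_eq_limsup hls hls2 (hFbdd t htO.1) (hFbdd' t)
  -- measurability and domination
  have hρaem : AEMeasurable ρ μ :=
    aemeasurable_of_tendsto_metrizable_ae' (fun i => (hFmeas i).aemeasurable) hae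
  have hgint : Integrable g μ := helper_g_integrable hAB.le _
  have haeIoc : ∀ᵐ t ∂μ, t ∈ Set.Ioc A B := by
    have hA : μ {A} = 0 :=
      le_antisymm ((hrle {A}).trans_eq (Real.volume_singleton)) zero_le
    have h2 : ∀ᵐ t ∂μ, t ≠ A := by
      rw [ae_iff]
      refine measure_mono_null (fun t ht => ?_) hA
      simpa using ht
    filter_upwards [ae_restrict_mem measurableSet_Icc, h2] with t htI htA
    exact ⟨lt_of_le_of_ne htI.1 (Ne.symm htA), htI.2⟩
  have hdom : ∀ i, ∀ᵐ t ∂μ, ‖|F i t - ρ t|‖ ≤ g t := by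
    intro i
    filter_upwards [haeIoc] with t ht
    have h1 : 0 ≤ F i t := hFnn i t
    have h2 : F i t ≤ g t := by simpa [min_eq_left ht.2] using hFbd i t ht.1
    have h3 : 0 ≤ ρ t := hρ_nn t ht.1
    have h4 : ρ t ≤ g t := hρ_le t ht
    rw [Real.norm_eq_abs, abs_abs]
    exact abs_sub_le_iff.2 ⟨by linarith, by linarith⟩
  have hdiffmeas : ∀ i, AEStronglyMeasurable (fun t => |F i t - ρ t|) μ := by
    intro i
    have h1 : AEStronglyMeasurable (fun t => F i t - ρ t) μ :=
      ((hFmeas i).aemeasurable.sub hρaem).aestronglyMeasurable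
    simpa [Real.norm_eq_abs] using h1.norm
  -- L¹ convergence
  have hL1 : Tendsto (fun i => ∫ t, |F i t - ρ t| ∂μ) atTop (𝓝 0) := by
    have h0 : (0:ℝ) = ∫ _ : ℝ, (0:ℝ) ∂μ := by simp
    rw [h0]
    refine tendsto_integral_of_dominated_convergence g hdiffmeas hgint hdom ?_
    filter_upwards [hae] with t ht
    have h1 : Tendsto (fun i => F i t - ρ t) atTop (𝓝 (ρ t - ρ t)) :=
      ht.sub tendsto_const_nhds
    simpa using h1.abs
  have hgoal1 : Tendsto (fun i => ∫ τ in Set.Icc A B, |ρs (ψ (φ' i)) τ - ρ τ|) atTop (𝓝 0) := by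
    refine hL1.congr (fun i => ?_)
    refine setIntegral_congr_fun measurableSet_Icc (fun τ hτ => ?_)
    simp only [hFdef, hσdef]
    rw [hcid τ hτ]
  -- Fatou
  have haψφ : Tendsto (fun i => a (ψ (φ' i))) atTop (𝓝 L) := hψtend.comp hφ'.tendsto_atTop
  have hrpow_cont : Continuous (fun x : ℝ => x ^ (3/2:ℝ)) :=
    Real.continuous_rpow_const (by norm_num)
  have hFint : ∀ i, Integrable (fun τ => F i τ ^ (3/2:ℝ)) μ := by
    intro i
    refine (hint (ψ (φ' i))).congr_fun (fun τ hτ => ?_) measurableSet_Icc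
    simp only [hFdef, hσdef]
    rw [hcid τ hτ]
  have hFeq : ∀ i, (∫ τ, F i τ ^ (3/2:ℝ) ∂μ) = a (ψ (φ' i)) := by
    intro i
    refine setIntegral_congr_fun measurableSet_Icc (fun τ hτ => ?_)
    simp only [hFdef, hσdef]
    rw [hcid τ hτ]
  have hlin : ∀ i, (∫⁻ τ, ENNReal.ofReal (F i τ ^ (3/2:ℝ)) ∂μ)
      = ENNReal.ofReal (a (ψ (φ' i))) := by
    intro i
    rw [← ofReal_integral_eq_lintegral_ofReal (hFint i)
      (Filter.Eventually.of_forall (fun τ => Real.rpow_nonneg (hFnn i τ) _)), hFeq i]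
  have hfatou : (∫⁻ τ, ENNReal.ofReal (ρ τ ^ (3/2:ℝ)) ∂μ) ≤ ENNReal.ofReal L := by
    have hptwise : ∀ᵐ τ ∂μ, ENNReal.ofReal (ρ τ ^ (3/2:ℝ)) ≤
        Filter.liminf (fun i => ENNReal.ofReal (F i τ ^ (3/2:ℝ))) atTop := by
      filter_upwards [hae] with τ hτ
      have h1 : Tendsto (fun i => ENNReal.ofReal (F i τ ^ (3/2:ℝ))) atTop
          (𝓝 (ENNReal.ofReal (ρ τ ^ (3/2:ℝ)))) :=
        (ENNReal.continuous_ofReal.tendsto _).comp ((hrpow_cont.tendsto _).comp hτ)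
      exact ge_of_eq h1.liminf_eq
    calc (∫⁻ τ, ENNReal.ofReal (ρ τ ^ (3/2:ℝ)) ∂μ)
        ≤ ∫⁻ τ, Filter.liminf (fun i => ENNReal.ofReal (F i τ ^ (3/2:ℝ))) atTop ∂μ :=
          lintegral_mono_ae hptwise
      _ ≤ Filter.liminf (fun i => ∫⁻ τ, ENNReal.ofReal (F i τ ^ (3/2:ℝ)) ∂μ) atTop :=
          lintegral_liminf_le (fun i =>
            (hrpow_cont.measurable.comp (hFmeas i)).ennreal_ofReal)
      _ = ENNReal.ofReal L := by
          simp only [hlin]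
          exact ((ENNReal.continuous_ofReal.tendsto L).comp haψφ).liminf_eq
  have hρnn_ae : 0 ≤ᵐ[μ] fun τ => ρ τ ^ (3/2:ℝ) := by
    filter_upwards [haeIoc] with τ hτ using Real.rpow_nonneg (hρ_nn τ hτ.1) _
  have hρsm : AEStronglyMeasurable (fun τ => ρ τ ^ (3/2:ℝ)) μ :=
    (hrpow_cont.measurable.comp_aemeasurable hρaem).aestronglyMeasurable
  have hfinal : (∫ τ, ρ τ ^ (3/2:ℝ) ∂μ) ≤ L := by
    rw [integral_eq_lintegral_of_nonneg_ae hρnn_ae hρsm]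
    calc (∫⁻ τ, ENNReal.ofReal (ρ τ ^ (3/2:ℝ)) ∂μ).toReal
        ≤ (ENNReal.ofReal L).toReal := ENNReal.toReal_mono ENNReal.ofReal_ne_top hfatou
      _ = L := ENNReal.toReal_ofReal hL0
  exact ⟨fun i => ψ (φ' i), ρ, hψ.comp hφ', hgoal1, hfinal⟩
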